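/- Let f : ℝ² → ℝ be given by f(x,y) = ∑_{n=1}^{∞} (1/n²) · exp(−π(n²x² + y²/n²)). Then the restriction of f to the line x = 0, i.e. the function y ↦ f(0,y) = ∑_{n=1}^{∞} (1/n²) · exp(−π y²/n²), is not integrable (not L¹) on ℝ with respect to Lebesgue measure. -/

import Mathlib

open MeasureTheory Complex
open scoped ComplexOrder

noncomputable section

/-- The function `f(x,y) = ∑_{n=1}^∞ (1/n²) exp(-π (n² x² + y²/n²))` on `ℝ²`. -/
def borisovExample (p : ℝ × ℝ) : ℝ :=
  ∑' n : ℕ, (1 / ((n : ℝ) + 1) ^ 2) *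
    Real.exp (-(Real.pi) * (((n : ℝ) + 1) ^ 2 * p.1 ^ 2 + p.2 ^ 2 / ((n : ℝ) + 1) ^ 2))

/-- The restriction of `f(x,y) = ∑_{n=1}^∞ (1/n²) exp(-π(n²x² + y²/n²))` to the
line `x = 0`, i.e. `y ↦ f(0,y) = ∑_{n=1}^∞ (1/n²) exp(-π y²/n²)`, is not Lebesgue-integrable
on `ℝ`. -/
theorem borisovExample_restriction_not_integrable :
    ¬ Integrable (fun y : ℝ => borisovExample (0, y)) (volume : Measure ℝ) := by
  intro hf
  set g : ℕ → ℝ → ℝ := fun n y =>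
    (1 / ((n : ℝ) + 1) ^ 2) * Real.exp (-(Real.pi / ((n : ℝ) + 1) ^ 2) * y ^ 2) with hgdef
  have hne : ∀ n : ℕ, ((n : ℝ) + 1) ≠ 0 := fun n => by positivity
  have hrepr : ∀ y : ℝ, borisovExample (0, y) = ∑' n : ℕ, g n y := by
    intro y
    unfold borisovExample
    refine tsum_congr fun n => ?_
    simp only [hgdef]
    congr 1
    field_simp
    simp
  have hsum : ∀ y : ℝ, Summable fun n : ℕ => g n y := by
    intro y
    apply Summable.of_nonneg_of_le (f := fun n : ℕ => 1 / ((n : ℝ) + 1) ^ 2)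
      (fun n => by positivity)
    · intro n
      have h1 : Real.exp (-(Real.pi / ((n : ℝ) + 1) ^ 2) * y ^ 2) ≤ 1 := by
        rw [Real.exp_le_one_iff]
        have : (0:ℝ) ≤ (Real.pi / ((n : ℝ) + 1) ^ 2) * y ^ 2 := by positivity
        linarith
      calc g n y ≤ (1 / ((n : ℝ) + 1) ^ 2) * 1 := by
            exact mul_le_mul_of_nonneg_left h1 (by positivity)
        _ = 1 / ((n : ℝ) + 1) ^ 2 := by ring
    · exact_mod_cast (summable_nat_add_iff 1).mpr
        (Real.summable_one_div_nat_pow.mpr one_lt_two)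
  have hgint : ∀ n : ℕ, Integrable (g n) := fun n =>
    (integrable_exp_neg_mul_sq (by positivity)).const_mul _
  have hgival : ∀ n : ℕ, (∫ y : ℝ, g n y) = 1 / ((n : ℝ) + 1) := by
    intro n
    simp only [hgdef]
    rw [MeasureTheory.integral_const_mul, integral_gaussian]
    have h1 : Real.pi / (Real.pi / ((n : ℝ) + 1) ^ 2) = ((n : ℝ) + 1) ^ 2 := by
      field_simp
    rw [h1, Real.sqrt_sq (by positivity)]
    field_simp
  have key : ∀ N : ℕ, (∑ n ∈ Finset.range N, (1 : ℝ) / ((n : ℝ) + 1)) ≤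
      ∫ y : ℝ, borisovExample (0, y) := by
    intro N
    have h1 : (∑ n ∈ Finset.range N, (1 : ℝ) / ((n : ℝ) + 1)) =
        ∫ y : ℝ, ∑ n ∈ Finset.range N, g n y := by
      rw [MeasureTheory.integral_finset_sum _ fun n _ => hgint n]
      simp [hgival]
    rw [h1]
    refine integral_mono (integrable_finset_sum _ fun n _ => hgint n) hf fun y => ?_
    rw [hrepr y]
    exact Summable.sum_le_tsum _ (fun n _ => by positivity) (hsum y)
  obtain ⟨N, hN⟩ := (Real.tendsto_sum_range_one_div_nat_succ_atTop.eventually_ge_atTop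
    ((∫ y : ℝ, borisovExample (0, y)) + 1)).exists
  have := key N
  simp only [one_div] at hN this
  linarith
end
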